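/- (Martingale strategy.) Let G ≤ Aut(T) be a closed subgroup. Assume that (i) the fixed-point process {X_n} of G is a martingale, and (ii) for every r > 0 there exist ε = ε(r) > 0 and m = m(r) such that μ_G(X_{n+m} = r | X_n = r) ≤ 1 − ε for infinitely many n ≥ 1. Then the fixed-point process of G is eventually zero μ_G-almost surely; in particular FPP(G) = 0. -/

import Mathlib

open MeasureTheory

namespace ArbGal

/-- Vertices of the `d`-regular rooted tree: the free monoid on `{0, …, d-1}`. -/
abbrev V (d : ℕ) := List (Fin d)

instance (d : ℕ) : TopologicalSpace (V d) := ⊥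

theorem Equiv.Perm.apply_inv_self {α : Type*} (f : Equiv.Perm α) (x : α) : f (f⁻¹ x) = x :=
  Equiv.apply_symm_apply f x

theorem Equiv.Perm.inv_apply_self {α : Type*} (f : Equiv.Perm α) (x : α) : f⁻¹ (f x) = x :=
  Equiv.symm_apply_apply f x

/-- A permutation of the vertices is an automorphism of the rooted tree iff it
preserves the level of vertices and the prefix (ancestor) relation. -/
def IsTreeAut {d : ℕ} (g : Equiv.Perm (V d)) : Prop :=
  (∀ v : V d, (g v).length = v.length) ∧ ∀ u v : V d, u <+: v → g u <+: g v

/-- The automorphism group `Aut(T)` of the `d`-regular rooted tree, realized as a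
subgroup of the permutation group of the set of vertices. -/
def treeAutGroup (d : ℕ) : Subgroup (Equiv.Perm (V d)) where
  carrier := {g | IsTreeAut g}
  one_mem' := ⟨fun _ => rfl, fun _ _ h => h⟩
  mul_mem' := by
    rintro a b ⟨ha1, ha2⟩ ⟨hb1, hb2⟩
    refine ⟨fun v => ?_, fun u v h => ?_⟩
    · simp only [Equiv.Perm.mul_apply, ha1, hb1]
    · simpa only [Equiv.Perm.mul_apply] using ha2 _ _ (hb2 _ _ h)
  inv_mem' := by
    rintro g ⟨h1, h2⟩
    have hlen : ∀ v : V _, (g⁻¹ v).length = v.length := by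
      intro v
      have := h1 (g⁻¹ v)
      rw [Equiv.Perm.apply_inv_self] at this
      exact this.symm
    refine ⟨hlen, fun u v huv => ?_⟩
    have h3 : (g⁻¹ v).take (g⁻¹ u).length <+: g⁻¹ v := List.take_prefix _ _
    have h4 : g ((g⁻¹ v).take (g⁻¹ u).length) <+: g (g⁻¹ v) := h2 _ _ h3
    rw [Equiv.Perm.apply_inv_self] at h4
    have hlen4 : (g ((g⁻¹ v).take (g⁻¹ u).length)).length = u.length := by
      rw [h1, List.length_take, hlen, hlen]
      exact min_eq_left huv.length_le
    have h5 : g ((g⁻¹ v).take (g⁻¹ u).length) = u := by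
      rcases List.prefix_or_prefix_of_prefix h4 huv with h | h
      · exact h.eq_of_length hlen4
      · exact (h.eq_of_length hlen4.symm).symm
    have h6 : (g⁻¹ v).take (g⁻¹ u).length = g⁻¹ u := by
      apply g.injective
      rw [h5, Equiv.Perm.apply_inv_self]
    rw [← h6]
    exact List.take_prefix _ _

/-- The group `Aut(T)`, as a type. -/
abbrev AutT (d : ℕ) := ↥(treeAutGroup d)

/-- `Aut(T)` carries the congruence topology, i.e. the topology of pointwise
convergence on the (discrete) set of vertices. -/
instance (d : ℕ) : TopologicalSpace (Equiv.Perm (V d)) :=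
  TopologicalSpace.induced (fun g => (g : V d → V d)) Pi.topologicalSpace

variable {d : ℕ}

lemma autT_len (g : AutT d) (v : V d) : ((g : Equiv.Perm (V d)) v).length = v.length := g.2.1 v

lemma autT_prefix (g : AutT d) {u v : V d} (h : u <+: v) :
    (g : Equiv.Perm (V d)) u <+: (g : Equiv.Perm (V d)) v := g.2.2 u v h

/-- The underlying function of the section `g|_v`. -/
def secFun (g : AutT d) (v w : V d) : V d := ((g : Equiv.Perm (V d)) (v ++ w)).drop v.length

lemma sec_spec (g : AutT d) (v w : V d) :
    (g : Equiv.Perm (V d)) (v ++ w) = (g : Equiv.Perm (V d)) v ++ secFun g v w := by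
  have h1 : (g : Equiv.Perm (V d)) v <+: (g : Equiv.Perm (V d)) (v ++ w) :=
    autT_prefix g (List.prefix_append v w)
  have h2 := autT_len g v
  have h3 : (g : Equiv.Perm (V d)) v = ((g : Equiv.Perm (V d)) (v ++ w)).take v.length := by
    rw [← h2]; exact List.prefix_iff_eq_take.mp h1
  conv_lhs => rw [← List.take_append_drop v.length ((g : Equiv.Perm (V d)) (v ++ w))]
  rw [← h3]; rfl

lemma coe_inv (g : AutT d) : ((g⁻¹ : AutT d) : Equiv.Perm (V d)) = (g : Equiv.Perm (V d))⁻¹ := rfl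

lemma sec_spec' (g : AutT d) (v w : V d) :
    (g : Equiv.Perm (V d)) (v ++ w)
      = (g : Equiv.Perm (V d)) v ++ List.drop v.length ((g : Equiv.Perm (V d)) (v ++ w)) :=
  sec_spec g v w

/-- The section (state) `g|_v` of a tree automorphism `g` at the vertex `v`; it is
the unique automorphism satisfying `g(v·w) = g(v)·(g|_v)(w)` for all `w`. -/
def sectionAt (g : AutT d) (v : V d) : AutT d :=
  ⟨{ toFun := secFun g v
     invFun := secFun g⁻¹ ((g : Equiv.Perm (V d)) v)
     left_inv := by
       intro w
       show secFun g⁻¹ ((g : Equiv.Perm (V d)) v) (secFun g v w) = w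
       unfold secFun
       rw [coe_inv, ← sec_spec' g v w, Equiv.Perm.inv_apply_self, autT_len, List.drop_left]
     right_inv := by
       intro w
       show secFun g v (secFun g⁻¹ ((g : Equiv.Perm (V d)) v) w) = w
       unfold secFun
       rw [coe_inv]
       have h := sec_spec' g⁻¹ ((g : Equiv.Perm (V d)) v) w
       rw [coe_inv, Equiv.Perm.inv_apply_self] at h
       rw [← h, Equiv.Perm.apply_inv_self, ← autT_len g v, List.drop_left] },
   by
     constructor
     · intro w
       show (secFun g v w).length = w.length
       unfold secFun
       rw [List.length_drop, autT_len, List.length_append]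
       omega
     · intro u w huw
       show secFun g v u <+: secFun g v w
       have h1 : v ++ u <+: v ++ w := by
         obtain ⟨c, rfl⟩ := huw
         rw [← List.append_assoc]
         exact List.prefix_append _ _
       have h2 := autT_prefix g h1
       rw [sec_spec g v u, sec_spec g v w] at h2
       obtain ⟨c, hc⟩ := h2
       rw [List.append_assoc] at hc
       exact ⟨c, List.append_cancel_left hc⟩⟩

/-- The pointwise stabilizer `St(n)` of the `n`-th level, as a subgroup of `Aut(T)`. -/
def levelStab (d n : ℕ) : Subgroup (AutT d) where
  carrier := {g | ∀ v : V d, v.length = n → (g : Equiv.Perm (V d)) v = v}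
  one_mem' := fun _ _ => rfl
  mul_mem' := by
    rintro a b ha hb v hv
    show (a : Equiv.Perm (V d)) ((b : Equiv.Perm (V d)) v) = v
    rw [hb v hv, ha v hv]
  inv_mem' := by
    intro g hg v hv
    show (g : Equiv.Perm (V d))⁻¹ v = v
    conv_lhs => rw [← hg v hv]
    exact Equiv.Perm.inv_apply_self _ _

/-- Two automorphisms agree on the truncated tree `T^m` (have the same image
under `π_m`). -/
def truncEq (d : ℕ) (m : ℕ) (g h : AutT d) : Prop :=
  ∀ w : V d, w.length ≤ m → (g : Equiv.Perm (V d)) w = (h : Equiv.Perm (V d)) w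

/-- `St_G(n)_v^m = π_m(G)`: the projection of the `n`-th level stabilizer of `G`
at the vertex `v`, truncated at depth `m`, coincides with `π_m(G)`. -/
def SectModEq (d : ℕ) (G : Subgroup (AutT d)) (n m : ℕ) (v : V d) : Prop :=
  ∀ a : AutT d,
    (∃ g, g ∈ G ∧ g ∈ levelStab d n ∧ (g : Equiv.Perm (V d)) v = v ∧
        truncEq d m (sectionAt g v) a)
    ↔ (∃ b ∈ G, truncEq d m b a)

/-- `G` is self-similar: all sections of elements of `G` belong to `G`. -/
def SelfSimilar (d : ℕ) (G : Subgroup (AutT d)) : Prop :=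
  ∀ g ∈ G, ∀ v : V d, sectionAt g v ∈ G

/-- `G` is level-transitive. -/
def LevelTrans (d : ℕ) (G : Subgroup (AutT d)) : Prop :=
  ∀ v w : V d, v.length = w.length → ∃ g ∈ G, (g : Equiv.Perm (V d)) v = w

/-- `G` is fractal: self-similar, level-transitive, and every projection
`G_v = φ_v(st_G(v))` is all of `G`. -/
def Fractal (d : ℕ) (G : Subgroup (AutT d)) : Prop :=
  SelfSimilar d G ∧ LevelTrans d G ∧
    ∀ v : V d, ∀ h ∈ G, ∃ g ∈ G, (g : Equiv.Perm (V d)) v = v ∧ sectionAt g v = h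

/-- For every `n ≥ 1`, the level stabilizer `St_G(n)` acts level-transitively on the
subtrees rooted at the vertices of level `n`. -/
def StabLevelTrans (d : ℕ) (G : Subgroup (AutT d)) : Prop :=
  ∀ n : ℕ, 1 ≤ n → ∀ v u w : V d, v.length = n → u.length = w.length →
    ∃ g ∈ G ⊓ levelStab d n, (g : Equiv.Perm (V d)) (v ++ u) = v ++ w

/-- A fractal group `G ≤ Aut(T)` is mixing with delay constant `N`. -/
def MixingWithDelay (d : ℕ) (G : Subgroup (AutT d)) (N : ℕ) : Prop :=
  Fractal d G ∧ StabLevelTrans d G ∧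
    ∀ m : ℕ, 1 ≤ m → ∀ n : ℕ, 1 ≤ n → ∀ v : V d, n + N ≤ v.length → SectModEq d G n m v

/-- A fractal group `G ≤ Aut(T)` is mixing: its level stabilizers act
level-transitively below their level, and for all `n, m ≥ 1` there is a delay
`N = N(m)` with `St_G(n)_v^m = π_m(G)` whenever `|v| ≥ n + N`. -/
def Mixing (d : ℕ) (G : Subgroup (AutT d)) : Prop :=
  Fractal d G ∧ StabLevelTrans d G ∧
    ∀ m : ℕ, 1 ≤ m → ∃ N : ℕ,
      ∀ n : ℕ, 1 ≤ n → ∀ v : V d, n + N ≤ v.length → SectModEq d G n m v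

/-- `g` fixes an end of the tree `T`, i.e. an infinite rooted path. -/
def FixesEnd (d : ℕ) (g : AutT d) : Prop :=
  ∃ ω : ℕ → Fin d, ∀ n : ℕ,
    (g : Equiv.Perm (V d)) (List.ofFn (fun i : Fin n => ω i)) = List.ofFn (fun i : Fin n => ω i)

/-- `X_n(g)`: the number of vertices of level `n` fixed by `g`. -/
noncomputable def Xfix (d n : ℕ) (g : AutT d) : ℕ :=
  Set.ncard {w : Fin n → Fin d |
    (g : Equiv.Perm (V d)) (List.ofFn w) = List.ofFn w}

/-- The Borel σ-algebra on a closed subgroup of `Aut(T)`. -/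
instance (d : ℕ) (G : Subgroup (AutT d)) : MeasurableSpace ↥G := borel ↥G

/-- The fixed-point process `{X_n}` of `G`, with respect to the measure `μ` on `G`,
is a martingale. -/
def FPMartingale (d : ℕ) (G : Subgroup (AutT d)) (μ : Measure ↥G) : Prop :=
  (∀ n : ℕ, 1 ≤ n → Integrable (fun g : ↥G => (Xfix d n (g : AutT d) : ℝ)) μ) ∧
  ∀ n : ℕ, 1 ≤ n → ∀ t : ℕ → ℝ,
    μ {g : ↥G | ∀ i, 1 ≤ i → i ≤ n → (Xfix d i (g : AutT d) : ℝ) = t i} ≠ 0 →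
    ∫ g in {g : ↥G | ∀ i, 1 ≤ i → i ≤ n → (Xfix d i (g : AutT d) : ℝ) = t i},
        (Xfix d (n + 1) (g : AutT d) : ℝ) ∂μ
      = t n * (μ {g : ↥G | ∀ i, 1 ≤ i → i ≤ n → (Xfix d i (g : AutT d) : ℝ) = t i}).toReal

set_option synthInstance.maxHeartbeats 1000000

section MeasAux

variable {d : ℕ} {G : Subgroup (AutT d)}

instance (d : ℕ) : DiscreteTopology (V d) := ⟨rfl⟩

lemma continuous_eval (G : Subgroup (AutT d)) (v : V d) :
    Continuous (fun g : ↥G => ((g : AutT d) : Equiv.Perm (V d)) v) := by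
  have h1 : Continuous (fun g : ↥G => ((g : AutT d) : Equiv.Perm (V d))) :=
    continuous_subtype_val.comp continuous_subtype_val
  have h2 : Continuous (fun p : Equiv.Perm (V d) => (p : V d → V d)) :=
    continuous_induced_dom
  exact (continuous_apply v).comp (h2.comp h1)

lemma measurableSet_fix (v : V d) :
    MeasurableSet {g : ↥G | ((g : AutT d) : Equiv.Perm (V d)) v = v} := by
  have : IsOpen {g : ↥G | ((g : AutT d) : Equiv.Perm (V d)) v = v} := by
    have := (continuous_eval G v).isOpen_preimage {v} (isOpen_discrete ({v} : Set (V d)))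
    simpa [Set.preimage, Set.mem_singleton_iff] using this
  exact MeasurableSpace.measurableSet_generateFrom this

lemma Xfix_eq_card (n : ℕ) (g : AutT d) :
    Xfix d n g = (Finset.univ.filter
      (fun w : Fin n → Fin d => (g : Equiv.Perm (V d)) (List.ofFn w) = List.ofFn w)).card := by
  classical
  rw [Xfix, ← Set.ncard_coe_finset]
  congr 1
  ext w
  simp

lemma measurable_XfixR (n : ℕ) :
    Measurable (fun g : ↥G => (Xfix d n (g : AutT d) : ℝ)) := by
  classical
  have : (fun g : ↥G => (Xfix d n (g : AutT d) : ℝ))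
      = fun g : ↥G => ∑ w : Fin n → Fin d,
          if ((g : AutT d) : Equiv.Perm (V d)) (List.ofFn w) = List.ofFn w then (1:ℝ) else 0 := by
    funext g
    rw [Xfix_eq_card, Finset.card_filter]
    push_cast
    rfl
  rw [this]
  exact Finset.measurable_sum _ (fun w _ =>
    Measurable.ite (measurableSet_fix (List.ofFn w)) measurable_const measurable_const)

lemma measurable_Xfix (n : ℕ) : Measurable (fun g : ↥G => Xfix d n (g : AutT d)) := by
  apply measurable_to_countable'
  intro r
  have : (fun g : ↥G => Xfix d n (g : AutT d)) ⁻¹' {r}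
      = (fun g : ↥G => (Xfix d n (g : AutT d) : ℝ)) ⁻¹' {(r : ℝ)} := by
    ext g; simp [Nat.cast_inj]
  rw [this]
  exact measurable_XfixR n (measurableSet_singleton _)

lemma measurableSet_Xfix_eq (n r : ℕ) :
    MeasurableSet {g : ↥G | Xfix d n (g : AutT d) = r} :=
  measurable_Xfix n (measurableSet_singleton r)

end MeasAux
section MartAux

variable {d : ℕ} {G : Subgroup (AutT d)}

/-- The vector of fixed-point counts `(X_1, …, X_{n+1})`, padded by `0`. -/
noncomputable def Phi (d : ℕ) (G : Subgroup (AutT d)) (n : ℕ) (g : ↥G) : ℕ → ℕ :=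
  fun i => if i ≤ n then Xfix d (i + 1) (g : AutT d) else 0

lemma measurableSet_atom (n : ℕ) (t : ℕ → ℕ) :
    MeasurableSet (Phi d G n ⁻¹' {t}) := by
  have : Phi d G n ⁻¹' {t} = ⋂ i : ℕ, {g : ↥G | Phi d G n g i = t i} := by
    ext g
    simp [Set.mem_iInter, funext_iff]
  rw [this]
  refine MeasurableSet.iInter fun i => ?_
  by_cases hi : i ≤ n
  · have : {g : ↥G | Phi d G n g i = t i} = {g : ↥G | Xfix d (i+1) (g : AutT d) = t i} := by
      ext g; simp [Phi, hi]
    rw [this]; exact measurableSet_Xfix_eq _ _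
  · have : {g : ↥G | Phi d G n g i = t i} = {g : ↥G | 0 = t i} := by
      ext g; simp [Phi, hi]
    rw [this]
    by_cases h0 : 0 = t i <;> simp [h0]

lemma countable_range_Phi (n : ℕ) : (Set.range (Phi d G n)).Countable := by
  classical
  rw [Set.countable_iff_exists_injective]
  refine ⟨fun h => Encodable.encode (fun i : Fin (n+1) => (h : ℕ → ℕ) i), ?_⟩
  rintro ⟨h₁, g₁, rfl⟩ ⟨h₂, g₂, rfl⟩ hh
  have hh' : (fun i : Fin (n+1) => Phi d G n g₁ i) = fun i : Fin (n+1) => Phi d G n g₂ i :=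
    Encodable.encode_injective hh
  have heq : ∀ i : ℕ, i ≤ n → Phi d G n g₁ i = Phi d G n g₂ i := by
    intro i hi
    exact congrFun hh' ⟨i, by omega⟩
  refine Subtype.ext (funext fun i => ?_)
  by_cases hi : i ≤ n
  · exact heq i hi
  · simp [Phi, hi]

lemma preimage_eq_iUnion_atoms (n : ℕ) (S : Set (ℕ → ℕ)) :
    Phi d G n ⁻¹' S = ⋃ t : ↥(S ∩ Set.range (Phi d G n) : Set (ℕ → ℕ)),
      Phi d G n ⁻¹' {(t : ℕ → ℕ)} := by
  ext g
  constructor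
  · intro hg
    exact Set.mem_iUnion.mpr ⟨⟨Phi d G n g, hg, ⟨g, rfl⟩⟩, rfl⟩
  · intro hg
    obtain ⟨i, hgt⟩ := Set.mem_iUnion.mp hg
    have h2 : Phi d G n g = (i : ℕ → ℕ) := Set.mem_singleton_iff.mp hgt
    show Phi d G n g ∈ S
    rw [h2]
    exact i.2.1

lemma measurableSet_filt {n : ℕ} {s : Set ↥G}
    (hs : MeasurableSet[MeasurableSpace.comap (Phi d G n) ⊤] s) : MeasurableSet s := by
  obtain ⟨S, -, rfl⟩ := hs
  rw [preimage_eq_iUnion_atoms]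
  have : Countable ↥(S ∩ Set.range (Phi d G n) : Set (ℕ → ℕ)) :=
    (((countable_range_Phi n).mono Set.inter_subset_right)).to_subtype
  exact MeasurableSet.iUnion fun t => measurableSet_atom n _

/-- The natural filtration of the fixed-point process (shifted by one). -/
noncomputable def filt (d : ℕ) (G : Subgroup (AutT d)) :
    Filtration ℕ (inferInstance : MeasurableSpace ↥G) where
  seq n := MeasurableSpace.comap (Phi d G n) ⊤
  mono' := by
    intro n m hnm
    have hcomp : Phi d G n = (fun h : ℕ → ℕ => fun i => if i ≤ n then h i else 0) ∘ Phi d G m := by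
      funext g i
      show (if i ≤ n then Xfix d (i+1) (g : AutT d) else 0)
        = if i ≤ n then (if i ≤ m then Xfix d (i+1) (g : AutT d) else 0) else 0
      by_cases hi : i ≤ n
      · rw [if_pos hi, if_pos hi, if_pos (hi.trans hnm)]
      · rw [if_neg hi, if_neg hi]
    show MeasurableSpace.comap (Phi d G n) ⊤ ≤ MeasurableSpace.comap (Phi d G m) ⊤
    rw [hcomp, ← MeasurableSpace.comap_comp]
    exact MeasurableSpace.comap_mono le_top
  le' := fun n s hs => measurableSet_filt hs

lemma adapted_filt (n : ℕ) :
    StronglyMeasurable[filt d G n] (fun g : ↥G => (Xfix d (n + 1) (g : AutT d) : ℝ)) := by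
  have h1 : @Measurable _ _ (filt d G n) ⊤ (Phi d G n) :=
    Measurable.of_comap_le le_rfl
  have h2 : (fun g : ↥G => (Xfix d (n + 1) (g : AutT d) : ℝ))
      = (fun h : ℕ → ℕ => (h n : ℝ)) ∘ Phi d G n := by
    funext g
    show ((Xfix d (n + 1) (g : AutT d) : ℕ) : ℝ) = ((if n ≤ n then Xfix d (n+1) (g : AutT d) else 0 : ℕ) : ℝ)
    rw [if_pos le_rfl]
  rw [h2]
  exact (@Measurable.comp _ _ _ (filt d G n) ⊤ _ _ _ measurable_from_top h1).stronglyMeasurable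

end MartAux
set_option linter.unusedSectionVars false

section MartProof

variable {d : ℕ} {G : Subgroup (AutT d)} {μ : Measure ↥G} [IsProbabilityMeasure μ]

/-- The (shifted) fixed-point process, real valued. -/
noncomputable def fpp (d : ℕ) (G : Subgroup (AutT d)) (k : ℕ) (g : ↥G) : ℝ :=
  (Xfix d (k + 1) (g : AutT d) : ℝ)

lemma atom_eq_hmartset (n : ℕ) (t : ℕ → ℕ) (ht : t ∈ Set.range (Phi d G n)) :
    Phi d G n ⁻¹' {t}
      = {g : ↥G | ∀ i, 1 ≤ i → i ≤ n + 1 →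
          (Xfix d i (g : AutT d) : ℝ) = (fun j => (t (j - 1) : ℝ)) i} := by
  ext g
  constructor
  · intro hg
    have hg' : Phi d G n g = t := Set.mem_singleton_iff.mp hg
    intro i h1 hi
    have hle : i - 1 ≤ n := by omega
    have := congrFun hg' (i - 1)
    rw [Phi, if_pos hle] at this
    have hi1 : i - 1 + 1 = i := by omega
    rw [hi1] at this
    show ((Xfix d i (g : AutT d) : ℕ) : ℝ) = ((t (i - 1) : ℕ) : ℝ)
    exact_mod_cast this
  · intro hg
    show Phi d G n g = t
    funext j
    by_cases hj : j ≤ n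
    · have htmp : ((Xfix d (j + 1) (g : AutT d) : ℕ) : ℝ) = ((t (j + 1 - 1) : ℕ) : ℝ) :=
        hg (j + 1) (by omega) (by omega)
      have h2 : (j + 1) - 1 = j := by omega
      rw [h2] at htmp
      have h3 : Xfix d (j + 1) (g : AutT d) = t j := by exact_mod_cast htmp
      rw [Phi, if_pos hj]
      exact h3
    · obtain ⟨g₀, hg₀⟩ := ht
      have := congrFun hg₀ j
      rw [Phi, if_neg hj] at this ⊢
      exact this

lemma atom_integral (hmart : FPMartingale d G μ) (n : ℕ) (t : ℕ → ℕ)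
    (ht : t ∈ Set.range (Phi d G n)) :
    ∫ g in Phi d G n ⁻¹' {t}, fpp d G (n + 1) g ∂μ
      = ∫ g in Phi d G n ⁻¹' {t}, fpp d G n g ∂μ := by
  by_cases h0 : μ (Phi d G n ⁻¹' {t}) = 0
  · rw [Measure.restrict_eq_zero.2 h0]
    simp
  · have hset := atom_eq_hmartset (G := G) n t ht
    have hkey := hmart.2 (n + 1) (by omega) (fun j => (t (j - 1) : ℝ)) (by rw [← hset]; exact h0)
    rw [← hset] at hkey
    have h1 : (n + 1 + 1) = n + 2 := rfl
    have hL : ∫ g in Phi d G n ⁻¹' {t}, fpp d G (n + 1) g ∂μ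
        = (t ((n + 1) - 1) : ℝ) * (μ (Phi d G n ⁻¹' {t})).toReal := hkey
    have hconst : ∀ g ∈ Phi d G n ⁻¹' {t}, fpp d G n g = (t n : ℝ) := by
      intro g hg
      have hg' : Phi d G n g = t := Set.mem_singleton_iff.mp hg
      have := congrFun hg' n
      rw [Phi, if_pos le_rfl] at this
      show ((Xfix d (n + 1) (g : AutT d) : ℕ) : ℝ) = ((t n : ℕ) : ℝ)
      exact_mod_cast this
    have hR : ∫ g in Phi d G n ⁻¹' {t}, fpp d G n g ∂μ
        = (μ (Phi d G n ⁻¹' {t})).toReal • (t n : ℝ) := by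
      rw [setIntegral_congr_fun (measurableSet_atom n t) hconst, setIntegral_const]
      rfl
    rw [hL, hR]
    have h2 : (n + 1) - 1 = n := by omega
    rw [h2, smul_eq_mul, mul_comm]

lemma filt_setIntegral_eq (hmart : FPMartingale d G μ) (n : ℕ) {s : Set ↥G}
    (hs : MeasurableSet[filt d G n] s) :
    ∫ g in s, fpp d G n g ∂μ = ∫ g in s, fpp d G (n + 1) g ∂μ := by
  obtain ⟨S, -, rfl⟩ := hs
  rw [preimage_eq_iUnion_atoms n S]
  haveI : Countable ↥(S ∩ Set.range (Phi d G n) : Set (ℕ → ℕ)) :=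
    (((countable_range_Phi n).mono Set.inter_subset_right)).to_subtype
  have hm : ∀ t : ↥(S ∩ Set.range (Phi d G n) : Set (ℕ → ℕ)),
      MeasurableSet (Phi d G n ⁻¹' {(t : ℕ → ℕ)}) := fun t => measurableSet_atom n _
  have hd : Pairwise (Function.onFun Disjoint
      (fun t : ↥(S ∩ Set.range (Phi d G n) : Set (ℕ → ℕ)) => Phi d G n ⁻¹' {(t : ℕ → ℕ)})) := by
    intro a b hab
    rw [Function.onFun, Set.disjoint_left]
    intro g hga hgb
    exact hab (Subtype.ext ((Set.mem_singleton_iff.mp hga).symm.trans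
      (Set.mem_singleton_iff.mp hgb)))
  rw [integral_iUnion hm hd
      ((show Integrable (fpp d G n) μ from hmart.1 (n + 1) (by omega)).integrableOn),
    integral_iUnion hm hd
      ((show Integrable (fpp d G (n + 1)) μ from hmart.1 (n + 2) (by omega)).integrableOn)]
  exact tsum_congr fun t => (atom_integral hmart n _ t.2.2).symm

lemma condexp_step (hmart : FPMartingale d G μ) (n : ℕ) :
    μ[fpp d G (n + 1)|filt d G n] =ᵐ[μ] fpp d G n := by
  haveI : IsFiniteMeasure (μ.trim ((filt d G).le n)) := isFiniteMeasure_trim _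
  refine (ae_eq_condExp_of_forall_setIntegral_eq ((filt d G).le n)
    (hmart.1 (n + 2) (by omega)) (fun s hs hμs => (hmart.1 (n + 1) (by omega)).integrableOn)
    (fun s hs hμs => filt_setIntegral_eq hmart n hs)
    (StronglyMeasurable.aestronglyMeasurable (adapted_filt n)) ).symm

lemma martingale_fpp (hmart : FPMartingale d G μ) : Martingale (fpp d G) (filt d G) μ := by
  refine ⟨fun n => adapted_filt n, ?_⟩
  intro i j hij
  induction j, hij using Nat.le_induction with
  | base =>
      haveI : IsFiniteMeasure (μ.trim ((filt d G).le i)) := isFiniteMeasure_trim _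
      exact Filter.EventuallyEq.of_eq
        (condExp_of_stronglyMeasurable ((filt d G).le i) (adapted_filt i)
          (hmart.1 (i + 1) (by omega)))
  | succ j hij IH =>
      calc μ[fpp d G (j + 1)|filt d G i]
          =ᵐ[μ] μ[μ[fpp d G (j + 1)|filt d G j]|filt d G i] :=
            (condExp_condExp_of_le ((filt d G).mono hij) ((filt d G).le j)).symm
        _ =ᵐ[μ] μ[fpp d G j|filt d G i] := condExp_congr_ae (condexp_step hmart j)
        _ =ᵐ[μ] fpp d G i := IH

lemma integral_fpp_const (hmart : FPMartingale d G μ) (n : ℕ) :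
    ∫ g, fpp d G n g ∂μ = ∫ g, fpp d G 0 g ∂μ := by
  haveI : IsFiniteMeasure (μ.trim ((filt d G).le 0)) := isFiniteMeasure_trim _
  have h1 := integral_condExp (μ := μ) (f := fpp d G n) ((filt d G).le 0)
  have h2 : μ[fpp d G n|filt d G 0] =ᵐ[μ] fpp d G 0 := (martingale_fpp hmart).2 0 n (Nat.zero_le n)
  rw [← h1]
  exact integral_congr_ae h2

lemma ae_tendsto_fpp (hmart : FPMartingale d G μ) :
    ∀ᵐ g ∂μ, ∃ c, Filter.Tendsto (fun k => fpp d G k g) Filter.atTop (nhds c) := by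
  refine (martingale_fpp hmart).submartingale.exists_ae_tendsto_of_bdd
    (R := (∫ g, fpp d G 0 g ∂μ).toNNReal) (fun n => ?_)
  have h1 : eLpNorm (fpp d G n) 1 μ = ENNReal.ofReal (∫ g, fpp d G n g ∂μ) := by
    rw [eLpNorm_one_eq_lintegral_enorm,
      ofReal_integral_eq_lintegral_ofReal
        (show Integrable (fpp d G n) μ from hmart.1 (n + 1) (by omega))
        (Filter.Eventually.of_forall fun g => Nat.cast_nonneg _)]
    exact lintegral_congr fun g =>
      Real.enorm_eq_ofReal (show (0:ℝ) ≤ fpp d G n g from Nat.cast_nonneg _)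
  rw [h1, integral_fpp_const hmart n]
  exact le_of_eq rfl

end MartProof
section Endgame

variable {d : ℕ} {G : Subgroup (AutT d)} {μ : Measure ↥G} [IsProbabilityMeasure μ]

lemma nat_eq_of_close {a b : ℕ} {c : ℝ} (ha : |(a : ℝ) - c| < 1/2) (hb : |(b : ℝ) - c| < 1/2) :
    a = b := by
  rcases lt_trichotomy a b with h | h | h
  · exfalso
    have h1 : (a : ℝ) + 1 ≤ b := by exact_mod_cast Nat.succ_le_of_lt h
    rw [abs_lt] at ha hb
    linarith
  · exact h
  · exfalso
    have h1 : (b : ℝ) + 1 ≤ a := by exact_mod_cast Nat.succ_le_of_lt h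
    rw [abs_lt] at ha hb
    linarith

lemma ae_eventually_const (hmart : FPMartingale d G μ) :
    ∀ᵐ (g : ↥G) ∂μ, ∃ r N : ℕ, ∀ n : ℕ, N ≤ n → Xfix d n (g : AutT d) = r := by
  filter_upwards [ae_tendsto_fpp hmart] with g hg
  obtain ⟨c, hc⟩ := hg
  obtain ⟨N, hN⟩ := (Metric.tendsto_atTop.mp hc) (1/2) (by norm_num)
  refine ⟨Xfix d (N + 1) (g : AutT d), N + 1, fun n hn => ?_⟩
  obtain ⟨k, rfl⟩ : ∃ k, n = k + 1 := ⟨n - 1, by omega⟩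
  have h1 := hN k (by omega)
  have h2 := hN N le_rfl
  rw [Real.dist_eq] at h1 h2
  exact nat_eq_of_close h1 h2

/-- The set of `g` whose fixed-point counts are eventually equal to `r` is measurable. -/
lemma measurableSet_eventually (r : ℕ) :
    MeasurableSet {g : ↥G | ∃ N : ℕ, ∀ n : ℕ, N ≤ n → Xfix d n (g : AutT d) = r} := by
  have : {g : ↥G | ∃ N : ℕ, ∀ n : ℕ, N ≤ n → Xfix d n (g : AutT d) = r}
      = ⋃ N : ℕ, ⋂ n : ℕ, ⋂ (_ : N ≤ n), {g : ↥G | Xfix d n (g : AutT d) = r} := by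
    ext g; simp
  rw [this]
  exact MeasurableSet.iUnion fun N => MeasurableSet.iInter fun n =>
    MeasurableSet.iInter fun _ => measurableSet_Xfix_eq n r

lemma measure_eventually_eq_zero (hmart : FPMartingale d G μ) (r : ℕ)
    (ε : ENNReal) (hε : 0 < ε) (m : ℕ)
    (hc : ∀ N₀ : ℕ, ∃ n : ℕ, N₀ ≤ n ∧ 1 ≤ n ∧
      μ {g : ↥G | Xfix d (n + m) (g : AutT d) = r ∧ Xfix d n (g : AutT d) = r}
          / μ {g : ↥G | Xfix d n (g : AutT d) = r} ≤ 1 - ε) :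
    μ {g : ↥G | ∃ N : ℕ, ∀ n : ℕ, N ≤ n → Xfix d n (g : AutT d) = r} = 0 := by
  set D : ℕ → Set ↥G := fun n => {g : ↥G | Xfix d n (g : AutT d) = r} with hD
  set C : Set ↥G := {g : ↥G | ∃ N : ℕ, ∀ n : ℕ, N ≤ n → Xfix d n (g : AutT d) = r} with hCdef
  set E : ℕ → Set ↥G := fun N => {g : ↥G | ∀ n : ℕ, N ≤ n → Xfix d n (g : AutT d) = r} with hE
  set B : ℕ → Set ↥G := fun n => D n \ C with hB
  set U : ℕ → Set ↥G := fun N => ⋃ n : ℕ, ⋃ (_ : N ≤ n), B n with hU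
  have measD : ∀ n, MeasurableSet (D n) := fun n => measurableSet_Xfix_eq n r
  have measC : MeasurableSet C := measurableSet_eventually r
  have measE : ∀ N, MeasurableSet (E N) := by
    intro N
    have : E N = ⋂ n : ℕ, ⋂ (_ : N ≤ n), D n := by ext g; simp [hE, hD]
    rw [this]
    exact MeasurableSet.iInter fun n => MeasurableSet.iInter fun _ => measD n
  have measB : ∀ n, MeasurableSet (B n) := fun n => (measD n).diff measC
  have measU : ∀ N, MeasurableSet (U N) :=
    fun N => MeasurableSet.iUnion fun n => MeasurableSet.iUnion fun _ => measB n
  -- Step A : the limsup of the B n is null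
  have stepA : μ (⋂ N : ℕ, U N) = 0 := by
    have hsub : (⋂ N : ℕ, U N) ⊆
        {g : ↥G | ¬ ∃ r' N : ℕ, ∀ n : ℕ, N ≤ n → Xfix d n (g : AutT d) = r'} := by
      intro g hg
      simp only [Set.mem_iInter] at hg
      intro hcon
      obtain ⟨r', N', hconst⟩ := hcon
      obtain ⟨n, hn⟩ := Set.mem_iUnion.mp (hg N')
      obtain ⟨hNn, hgB⟩ := Set.mem_iUnion.mp hn
      have hgD : Xfix d n (g : AutT d) = r := hgB.1
      have hgnC : g ∉ C := hgB.2
      have hr' : r' = r := by rw [← hconst n hNn, hgD]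
      exact hgnC ⟨N', fun k hk => by rw [hconst k hk, hr']⟩
    refine le_antisymm ?_ zero_le
    calc μ (⋂ N : ℕ, U N)
        ≤ μ {g : ↥G | ¬ ∃ r' N : ℕ, ∀ n : ℕ, N ≤ n → Xfix d n (g : AutT d) = r'} :=
          measure_mono hsub
      _ = 0 := ae_eventually_const hmart
  -- Step B : μ (U N) → 0
  have stepB : Filter.Tendsto (fun N => μ (U N)) Filter.atTop (nhds 0) := by
    have hanti : Antitone U := by
      intro N M hNM g hg
      obtain ⟨n, hn⟩ := Set.mem_iUnion.mp hg
      obtain ⟨hMn, hgB⟩ := Set.mem_iUnion.mp hn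
      exact Set.mem_iUnion.mpr ⟨n, Set.mem_iUnion.mpr ⟨hNM.trans hMn, hgB⟩⟩
    have := tendsto_measure_iInter_atTop (μ := μ)
      (fun N => (measU N).nullMeasurableSet) hanti ⟨0, measure_ne_top μ _⟩
    rw [stepA] at this
    exact this
  -- Step C : μ (E N) ≤ (1 - ε) * μ C
  have stepC : ∀ N : ℕ, μ (E N) ≤ (1 - ε) * μ C := by
    intro N
    refine ENNReal.le_of_forall_pos_le_add fun δ hδ _ => ?_
    obtain ⟨M, hM⟩ := ENNReal.tendsto_atTop_zero.mp stepB δ (by exact_mod_cast hδ)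
    obtain ⟨n, hnN, hn1, hdiv⟩ := hc (max N M)
    have hnN' : N ≤ n := le_trans (le_max_left _ _) hnN
    have hnM : M ≤ n := le_trans (le_max_right _ _) hnN
    -- conditional bound without division
    have hmul : μ {g : ↥G | Xfix d (n + m) (g : AutT d) = r ∧ Xfix d n (g : AutT d) = r}
        ≤ (1 - ε) * μ (D n) := by
      by_cases hz : μ (D n) = 0
      · calc μ {g : ↥G | Xfix d (n + m) (g : AutT d) = r ∧ Xfix d n (g : AutT d) = r}
            ≤ μ (D n) := measure_mono fun g hg => hg.2
          _ = 0 := hz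
          _ ≤ _ := zero_le
      · exact (ENNReal.div_le_iff_le_mul (Or.inl hz) (Or.inl (measure_ne_top μ _))).mp hdiv
    have hEsub : E N ⊆ {g : ↥G | Xfix d (n + m) (g : AutT d) = r ∧ Xfix d n (g : AutT d) = r} :=
      fun g hg => ⟨hg (n + m) (by omega), hg n hnN'⟩
    have hDn : μ (D n) ≤ δ + μ C := by
      have hsplit : D n ⊆ B n ∪ C := by
        intro g hg
        by_cases hgC : g ∈ C
        · exact Or.inr hgC
        · exact Or.inl ⟨hg, hgC⟩
      have hBU : B n ⊆ U n := fun g hg => Set.mem_iUnion.mpr ⟨n, Set.mem_iUnion.mpr ⟨le_rfl, hg⟩⟩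
      calc μ (D n) ≤ μ (B n ∪ C) := measure_mono hsplit
        _ ≤ μ (B n) + μ C := measure_union_le _ _
        _ ≤ μ (U n) + μ C := add_le_add_left (measure_mono hBU) _
        _ ≤ δ + μ C := add_le_add_left (hM n hnM) _
    calc μ (E N) ≤ μ {g : ↥G | Xfix d (n + m) (g : AutT d) = r ∧ Xfix d n (g : AutT d) = r} :=
          measure_mono hEsub
      _ ≤ (1 - ε) * μ (D n) := hmul
      _ ≤ (1 - ε) * (δ + μ C) := mul_le_mul_right hDn _
      _ = (1 - ε) * δ + (1 - ε) * μ C := by rw [mul_add]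
      _ ≤ 1 * δ + (1 - ε) * μ C := by
          exact add_le_add_left (mul_le_mul_left tsub_le_self _) _
      _ = (1 - ε) * μ C + δ := by rw [one_mul, add_comm]
  -- Step D : μ C ≤ (1 - ε) * μ C
  have hCU : C = ⋃ N : ℕ, E N := by ext g; simp [hCdef, hE]
  have hmono : Monotone E := fun N M hNM g hg n hn => hg n (hNM.trans hn)
  have stepD : μ C ≤ (1 - ε) * μ C := by
    have hsup : μ C = ⨆ N : ℕ, μ (E N) := by
      rw [hCU]
      exact (hmono.directed_le).measure_iUnion
    calc μ C = ⨆ N : ℕ, μ (E N) := hsup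
      _ ≤ (1 - ε) * μ C := iSup_le stepC
  -- conclude
  by_contra hne
  have h1 : (1 - ε) * μ C < 1 * μ C := by
    rw [ENNReal.mul_lt_mul_iff_left hne (measure_ne_top μ C)]
    exact ENNReal.sub_lt_self ENNReal.one_ne_top one_ne_zero hε.ne'
  rw [one_mul] at h1
  exact absurd (lt_of_le_of_lt stepD h1) (lt_irrefl _)

end Endgame

/-- **Martingale strategy.** Let `G ≤ Aut(T)` be a closed subgroup whose
fixed-point process `{X_n}` is a martingale, and such that for every `r > 0` there are
`ε = ε(r) > 0` and `m = m(r)` with `μ_G(X_{n+m} = r | X_n = r) ≤ 1 − ε` for infinitely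
many `n ≥ 1`.  Then the fixed-point process of `G` is eventually zero `μ_G`-almost
surely; in particular `FPP(G) = 0`. -/
theorem martingale_strategy
    (d : ℕ) (hd : 2 ≤ d) (G : Subgroup (AutT d))
    (hclosed : IsClosed (G : Set (AutT d)))
    (μ : Measure ↥G) [IsProbabilityMeasure μ] [μ.IsMulLeftInvariant]
    (hmart : FPMartingale d G μ)
    (hcond : ∀ r : ℕ, 1 ≤ r → ∃ ε : ENNReal, 0 < ε ∧ ∃ m : ℕ,
      ∀ N₀ : ℕ, ∃ n : ℕ, N₀ ≤ n ∧ 1 ≤ n ∧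
        μ {g : ↥G | Xfix d (n + m) (g : AutT d) = r ∧ Xfix d n (g : AutT d) = r}
            / μ {g : ↥G | Xfix d n (g : AutT d) = r} ≤ 1 - ε) :
    μ {g : ↥G | ∃ N : ℕ, ∀ n : ℕ, N ≤ n → Xfix d n (g : AutT d) = 0} = 1 ∧
    μ {g : ↥G | FixesEnd d (g : AutT d)} = 0 := by
  have hCr : ∀ r : ℕ, 1 ≤ r →
      μ {g : ↥G | ∃ N : ℕ, ∀ n : ℕ, N ≤ n → Xfix d n (g : AutT d) = r} = 0 := by
    intro r hr
    obtain ⟨ε, hε, m, hc⟩ := hcond r hr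
    exact measure_eventually_eq_zero hmart r ε hε m hc
  set T : Set ↥G := {g : ↥G | ∃ N : ℕ, ∀ n : ℕ, N ≤ n → Xfix d n (g : AutT d) = 0} with hT
  have hTmeas : MeasurableSet T := measurableSet_eventually 0
  have hTc : μ Tᶜ = 0 := by
    have hsub : Tᶜ ⊆ {g : ↥G | ¬ ∃ r N : ℕ, ∀ n : ℕ, N ≤ n → Xfix d n (g : AutT d) = r}
        ∪ ⋃ r : ℕ, {g : ↥G | ∃ N : ℕ, ∀ n : ℕ, N ≤ n → Xfix d n (g : AutT d) = r + 1} := by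
      intro g hg
      by_cases hcst : ∃ r N : ℕ, ∀ n : ℕ, N ≤ n → Xfix d n (g : AutT d) = r
      · obtain ⟨r, N, hconst⟩ := hcst
        rcases Nat.eq_zero_or_pos r with h0 | hpos
        · exact absurd ⟨N, fun n hn => h0 ▸ hconst n hn⟩ hg
        · refine Or.inr (Set.mem_iUnion.mpr ⟨r - 1, N, fun n hn => ?_⟩)
          rw [hconst n hn]
          omega
      · exact Or.inl hcst
    refine le_antisymm ?_ zero_le
    calc μ Tᶜ ≤ _ := measure_mono hsub
      _ = 0 := measure_union_null (ae_eventually_const hmart)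
        (measure_iUnion_null fun r => hCr (r + 1) (by omega))
  have hT1 : μ T = 1 := by
    have hcompl := measure_compl hTmeas (measure_ne_top μ T)
    rw [hTc, measure_univ] at hcompl
    exact le_antisymm prob_le_one (tsub_eq_zero_iff_le.mp hcompl.symm)
  refine ⟨hT1, ?_⟩
  have hsub2 : {g : ↥G | FixesEnd d (g : AutT d)} ⊆ Tᶜ := by
    intro g hg hgT
    obtain ⟨ω, hω⟩ := hg
    obtain ⟨N, hN⟩ := hgT
    have h0 := hN N le_rfl
    have hpos : 0 < Xfix d N (g : AutT d) := by
      refine (Set.ncard_pos (Set.toFinite _)).mpr ?_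
      exact ⟨fun i : Fin N => ω i, hω N⟩
    omega
  exact le_antisymm (le_trans (measure_mono hsub2) (le_of_eq hTc)) zero_le

end ArbGal
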